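/- Let p₁, p₂, p₃ ≥ 2 be integers, let S = {(l₁,l₂,l₃) ∈ ℤ³ : 0 ≤ lᵢ ≤ pᵢ − 2}, and for j ∈ {1,2,3} let σⱼ : S → S be the involution with (σⱼ(l))ⱼ = lⱼ and (σⱼ(l))ᵢ = pᵢ − 2 − lᵢ for i ≠ j. Then the action of the group generated by σ₁, σ₂, σ₃ on S has exactly one orbit if and only if the multiset {p₁, p₂, p₃} is one of {2,2,2}, {2,2,3}, {2,3,3}. -/
import Mathlib


/-- The index set S = {(l₁,l₂,l₃) ∈ ℤ³ : 0 ≤ lᵢ ≤ pᵢ − 2}. -/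
abbrev SBox (p : Fin 3 → ℤ) := {l : Fin 3 → ℤ // ∀ i, 0 ≤ l i ∧ l i ≤ p i - 2}

/-- The map σⱼ : S → S fixing the j-th coordinate and sending lᵢ to pᵢ − 2 − lᵢ for i ≠ j. -/
def sigmaFun (p : Fin 3 → ℤ) (j : Fin 3) (l : SBox p) : SBox p :=
  ⟨fun i => if i = j then l.1 i else p i - 2 - l.1 i, by
    intro i
    rcases eq_or_ne i j with h | h
    · subst h; simpa using l.2 i
    · have := l.2 i; simp only [if_neg h]; omega⟩

lemma sigmaFun_involutive (p : Fin 3 → ℤ) (j : Fin 3) :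
    Function.Involutive (sigmaFun p j) := by
  intro l
  apply Subtype.ext
  funext i
  by_cases h : i = j <;> simp [sigmaFun, h]

/-- σⱼ as a permutation of S. -/
def sigmaPerm (p : Fin 3 → ℤ) (j : Fin 3) : Equiv.Perm (SBox p) :=
  (sigmaFun_involutive p j).toPerm

lemma sigma_coord (p : Fin 3 → ℤ) (j : Fin 3) (l : SBox p) (i : Fin 3) :
    ((sigmaPerm p j) l).1 i = if i = j then l.1 i else p i - 2 - l.1 i := rfl

lemma sigma_sq (p : Fin 3 → ℤ) (j : Fin 3) : sigmaPerm p j * sigmaPerm p j = 1 := by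
  refine Equiv.ext fun l => ?_
  simpa [sigmaPerm] using sigmaFun_involutive p j l

lemma sigma_inv (p : Fin 3 → ℤ) (j : Fin 3) : (sigmaPerm p j)⁻¹ = sigmaPerm p j :=
  (eq_inv_of_mul_eq_one_left (sigma_sq p j)).symm

lemma sigma_mul_mem (p : Fin 3 → ℤ) (i j : Fin 3) :
    sigmaPerm p i * sigmaPerm p j ∈
      ({1, sigmaPerm p 0, sigmaPerm p 1, sigmaPerm p 2} : Set (Equiv.Perm (SBox p))) := by
  simp only [Set.mem_insert_iff, Set.mem_singleton_iff]
  fin_cases i <;> fin_cases j <;>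
    [ (exact Or.inl (sigma_sq p 0));
      (refine Or.inr (Or.inr (Or.inr ?_)));
      (refine Or.inr (Or.inr (Or.inl ?_)));
      (refine Or.inr (Or.inr (Or.inr ?_)));
      (exact Or.inl (sigma_sq p 1));
      (refine Or.inr (Or.inl ?_));
      (refine Or.inr (Or.inr (Or.inl ?_)));
      (refine Or.inr (Or.inl ?_));
      (exact Or.inl (sigma_sq p 2))] <;>
  · refine Equiv.ext fun l => Subtype.ext (funext fun m => ?_)
    fin_cases m <;> simp [Equiv.Perm.mul_apply, sigma_coord]

/-- The Klein four group as a subgroup. -/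
def KGrp (p : Fin 3 → ℤ) : Subgroup (Equiv.Perm (SBox p)) where
  carrier := {1, sigmaPerm p 0, sigmaPerm p 1, sigmaPerm p 2}
  one_mem' := Or.inl rfl
  mul_mem' := by
    rintro a b (rfl | rfl | rfl | rfl) (rfl | rfl | rfl | rfl) <;>
      first
        | exact sigma_mul_mem _ _ _
        | simp [Set.mem_insert_iff]
  inv_mem' := by
    rintro a (rfl | rfl | rfl | rfl) <;> simp [sigma_inv, Set.mem_insert_iff]

lemma orbit_sub (p : Fin 3 → ℤ) (x y : SBox p)
    (h : x ∈ MulAction.orbit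
      (Subgroup.closure {sigmaPerm p 0, sigmaPerm p 1, sigmaPerm p 2}) y) :
    x = y ∨ x = sigmaPerm p 0 y ∨ x = sigmaPerm p 1 y ∨ x = sigmaPerm p 2 y := by
  obtain ⟨g, rfl⟩ := h
  have hg : (g : Equiv.Perm (SBox p)) ∈ KGrp p := by
    refine (Subgroup.closure_le (KGrp p)).2 ?_ g.2
    intro s hs
    rcases hs with rfl | rfl | rfl
    · exact Or.inr (Or.inl rfl)
    · exact Or.inr (Or.inr (Or.inl rfl))
    · exact Or.inr (Or.inr (Or.inr rfl))
  rcases hg with hg | hg | hg | hg <;>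
    [left; (right; left); (right; right; left); (right; right; right)] <;>
    show (g : Equiv.Perm (SBox p)) y = _ <;> rw [hg] <;> rfl

lemma orbit_sub' (p : Fin 3 → ℤ) (x y : SBox p)
    (h : x ∈ MulAction.orbit
      (Subgroup.closure {sigmaPerm p 0, sigmaPerm p 1, sigmaPerm p 2}) y) :
    (x.1 0 = y.1 0 ∧ x.1 1 = y.1 1 ∧ x.1 2 = y.1 2) ∨
    (x.1 0 = y.1 0 ∧ x.1 1 = p 1 - 2 - y.1 1 ∧ x.1 2 = p 2 - 2 - y.1 2) ∨
    (x.1 0 = p 0 - 2 - y.1 0 ∧ x.1 1 = y.1 1 ∧ x.1 2 = p 2 - 2 - y.1 2) ∨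
    (x.1 0 = p 0 - 2 - y.1 0 ∧ x.1 1 = p 1 - 2 - y.1 1 ∧ x.1 2 = y.1 2) := by
  rcases orbit_sub p x y h with rfl | rfl | rfl | rfl
  · exact Or.inl ⟨rfl, rfl, rfl⟩
  · refine Or.inr (Or.inl ⟨?_, ?_, ?_⟩) <;> simp [sigma_coord]
  · refine Or.inr (Or.inr (Or.inl ⟨?_, ?_, ?_⟩)) <;> simp [sigma_coord]
  · refine Or.inr (Or.inr (Or.inr ⟨?_, ?_, ?_⟩)) <;> simp [sigma_coord]

/-- Transitivity criterion (Corollary 2.6, combinatorial form): the group generated by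
σ₁, σ₂, σ₃ has exactly one orbit on S iff the weight type is (2,2,2), (2,2,3) or (2,3,3)
as a multiset. -/
theorem one_orbit_iff (p : Fin 3 → ℤ) (hp : ∀ i, 2 ≤ p i) :
    Nat.card (Quotient (MulAction.orbitRel
      (Subgroup.closure {sigmaPerm p 0, sigmaPerm p 1, sigmaPerm p 2}) (SBox p))) = 1 ↔
    (({p 0, p 1, p 2} : Multiset ℤ) = {2, 2, 2} ∨
     ({p 0, p 1, p 2} : Multiset ℤ) = {2, 2, 3} ∨
     ({p 0, p 1, p 2} : Multiset ℤ) = {2, 3, 3}) := by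
  have h2 := hp 0; have h3 := hp 1; have h4 := hp 2
  have hx0 : ∀ i, (0:ℤ) ≤ (fun _ : Fin 3 => (0:ℤ)) i ∧ (fun _ : Fin 3 => (0:ℤ)) i ≤ p i - 2 := by
    intro i
    refine ⟨le_refl 0, show (0:ℤ) ≤ p i - 2 from ?_⟩
    have := hp i; omega
  rw [Nat.card_eq_one_iff_unique]
  constructor
  · rintro ⟨hs, -⟩
    have hrel : ∀ x y : SBox p,
        (x.1 0 = y.1 0 ∧ x.1 1 = y.1 1 ∧ x.1 2 = y.1 2) ∨
        (x.1 0 = y.1 0 ∧ x.1 1 = p 1 - 2 - y.1 1 ∧ x.1 2 = p 2 - 2 - y.1 2) ∨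
        (x.1 0 = p 0 - 2 - y.1 0 ∧ x.1 1 = y.1 1 ∧ x.1 2 = p 2 - 2 - y.1 2) ∨
        (x.1 0 = p 0 - 2 - y.1 0 ∧ x.1 1 = p 1 - 2 - y.1 1 ∧ x.1 2 = y.1 2) := by
      intro x y
      refine orbit_sub' p x y ?_
      exact Quotient.exact (Subsingleton.elim
        (Quotient.mk (MulAction.orbitRel _ (SBox p)) x)
        (Quotient.mk (MulAction.orbitRel _ (SBox p)) y))
    have mem_e : ∀ c : Fin 3, 3 ≤ p c →
        ∀ i, (0:ℤ) ≤ (fun i => if i = c then (1:ℤ) else 0) i ∧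
          (fun i => if i = c then (1:ℤ) else 0) i ≤ p i - 2 := by
      intro c hc i
      rcases eq_or_ne i c with rfl | hi
      · refine ⟨?_, ?_⟩ <;> show _ ≤ _ <;> simp <;> omega
      · refine ⟨?_, ?_⟩ <;> show _ ≤ _ <;> simp [hi] <;> (have := hp i; omega)
    have c0 : p 0 ≤ 3 := by
      by_contra hc
      push_neg at hc
      have := hrel ⟨fun i => if i = 0 then 1 else 0, mem_e 0 (by omega)⟩ ⟨fun _ => 0, hx0⟩
      simp only at this
      norm_num at this
      omega
    have c1 : p 1 ≤ 3 := by
      by_contra hc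
      push_neg at hc
      have := hrel ⟨fun i => if i = 1 then 1 else 0, mem_e 1 (by omega)⟩ ⟨fun _ => 0, hx0⟩
      simp only at this
      norm_num at this
      omega
    have c2 : p 2 ≤ 3 := by
      by_contra hc
      push_neg at hc
      have := hrel ⟨fun i => if i = 2 then 1 else 0, mem_e 2 (by omega)⟩ ⟨fun _ => 0, hx0⟩
      simp only at this
      norm_num at this
      omega
    have c3 : ¬ (p 0 = 3 ∧ p 1 = 3 ∧ p 2 = 3) := by
      rintro ⟨ha, hb, hcc⟩
      have := hrel ⟨fun i => if i = 0 then 1 else 0, mem_e 0 (by omega)⟩ ⟨fun _ => 0, hx0⟩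
      simp only at this
      norm_num at this
      omega
    have v0 : p 0 = 2 ∨ p 0 = 3 := by omega
    have v1 : p 1 = 2 ∨ p 1 = 3 := by omega
    have v2 : p 2 = 2 ∨ p 2 = 3 := by omega
    rcases v0 with v0 | v0 <;> rcases v1 with v1 | v1 <;> rcases v2 with v2 | v2 <;>
      rw [v0, v1, v2] <;> first
        | exact Or.inl (by decide)
        | exact Or.inr (Or.inl (by decide))
        | exact Or.inr (Or.inr (by decide))
        | exact absurd ⟨v0, v1, v2⟩ c3
  · intro h
    have hm0 : p 0 ∈ ({p 0, p 1, p 2} : Multiset ℤ) := by simp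
    have hm1 : p 1 ∈ ({p 0, p 1, p 2} : Multiset ℤ) := by simp
    have hm2 : p 2 ∈ ({p 0, p 1, p 2} : Multiset ℤ) := by simp
    have key : (p 0 ≤ 3 ∧ p 1 ≤ 3 ∧ p 2 ≤ 3) ∧ (p 0 - 2) + (p 1 - 2) + (p 2 - 2) ≤ 2 := by
      rcases h with h | h | h <;>
      · rw [h] at hm0 hm1 hm2
        have hs : p 0 + p 1 + p 2 = ({p 0, p 1, p 2} : Multiset ℤ).sum := by
          simp [add_assoc]
        rw [h] at hs
        simp at hs hm0 hm1 hm2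
        omega
    obtain ⟨⟨hl0, hl1, hl2⟩, hsum2⟩ := key
    have trans : ∀ x y : SBox p,
        x = y ∨ x = sigmaPerm p 0 y ∨ x = sigmaPerm p 1 y ∨ x = sigmaPerm p 2 y := by
      intro x y
      have hb0 := x.2 0; have hb1 := x.2 1; have hb2 := x.2 2
      have hy0 := y.2 0; have hy1 := y.2 1; have hy2 := y.2 2
      have hc : (x.1 0 = y.1 0 ∧ x.1 1 = y.1 1 ∧ x.1 2 = y.1 2) ∨
          (x.1 0 = y.1 0 ∧ x.1 1 = p 1 - 2 - y.1 1 ∧ x.1 2 = p 2 - 2 - y.1 2) ∨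
          (x.1 0 = p 0 - 2 - y.1 0 ∧ x.1 1 = y.1 1 ∧ x.1 2 = p 2 - 2 - y.1 2) ∨
          (x.1 0 = p 0 - 2 - y.1 0 ∧ x.1 1 = p 1 - 2 - y.1 1 ∧ x.1 2 = y.1 2) := by
        omega
      rcases hc with hc | hc | hc | hc <;>
        [left; (right; left); (right; right; left); (right; right; right)] <;>
        · apply Subtype.ext
          funext i
          have hi : i = 0 ∨ i = 1 ∨ i = 2 := by revert i; decide
          rcases hi with rfl | rfl | rfl <;> (try simp only [sigma_coord]) <;> (try norm_num) <;> omega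
    have mem : ∀ j : Fin 3, sigmaPerm p j ∈
        Subgroup.closure {sigmaPerm p 0, sigmaPerm p 1, sigmaPerm p 2} := by
      intro j
      apply Subgroup.subset_closure
      fin_cases j <;> simp
    refine ⟨⟨fun u v => ?_⟩,
      ⟨Quotient.mk (MulAction.orbitRel
        (Subgroup.closure {sigmaPerm p 0, sigmaPerm p 1, sigmaPerm p 2}) (SBox p))
        ⟨fun _ => 0, hx0⟩⟩⟩
    induction u using Quotient.ind
    induction v using Quotient.ind
    rename_i x y
    refine Quotient.sound ?_
    rcases trans x y with hc | hc | hc | hc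
    · exact ⟨1, by simp [hc]⟩
    · exact ⟨⟨sigmaPerm p 0, mem 0⟩, hc.symm⟩
    · exact ⟨⟨sigmaPerm p 1, mem 1⟩, hc.symm⟩
    · exact ⟨⟨sigmaPerm p 2, mem 2⟩, hc.symm⟩
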